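/- arXiv:2306.01154 — 2 statements merged into one kernel-verified Lean document; each statement's English description precedes it below -/
import Mathlib

section
/- For any matrix A ∈ ℝ^{m×n} of rank r, the Frobenius norm satisfies ‖AᵀA‖_F ≤ ‖A‖_F² ≤ √r · ‖AᵀA‖_F. -/
open Matrix
/-- Frobenius norm of a real matrix. -/
noncomputable def frob {m n : ℕ} (A : Matrix (Fin m) (Fin n) ℝ) : ℝ :=
  Real.sqrt (∑ i, ∑ j, (A i j) ^ 2)

section aux

variable {n : ℕ} {B : Matrix (Fin n) (Fin n) ℝ} (hB : B.IsHermitian)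

lemma aux_trace_eq_sum_eigenvalues : B.trace = ∑ i, hB.eigenvalues i := by
  conv_lhs => rw [hB.spectral_theorem, Unitary.conjStarAlgAut_apply]
  rw [Matrix.trace_mul_comm]
  rw [show ∀ U D V : Matrix (Fin n) (Fin n) ℝ, V * (U * D) = (V * U) * D by
    intros; noncomm_ring]
  have hU : (star (hB.eigenvectorUnitary : Matrix (Fin n) (Fin n) ℝ)) *
      (hB.eigenvectorUnitary : Matrix (Fin n) (Fin n) ℝ) = 1 := by
    exact mem_unitaryGroup_iff'.mp hB.eigenvectorUnitary.2
  rw [hU, one_mul, Matrix.trace_diagonal]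
  simp

lemma aux_trace_sq_eq_sum_sq : (B * B).trace = ∑ i, hB.eigenvalues i ^ 2 := by
  have hU : (star (hB.eigenvectorUnitary : Matrix (Fin n) (Fin n) ℝ)) *
      (hB.eigenvectorUnitary : Matrix (Fin n) (Fin n) ℝ) = 1 := by
    exact mem_unitaryGroup_iff'.mp hB.eigenvectorUnitary.2
  conv_lhs => rw [hB.spectral_theorem, Unitary.conjStarAlgAut_apply]
  rw [show ∀ U D V : Matrix (Fin n) (Fin n) ℝ, (U * D * V) * (U * D * V)
      = U * (D * (V * U) * D) * V by intros; noncomm_ring, hU, mul_one,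
    Matrix.trace_mul_comm, ← mul_assoc, hU, one_mul, diagonal_mul_diagonal,
    Matrix.trace_diagonal]
  simp [sq]

end aux

/-- For any matrix `A ∈ ℝ^{m×n}` of rank `r`, we have
`‖AᵀA‖_F ≤ ‖A‖_F² ≤ √r · ‖AᵀA‖_F`. -/
theorem frob_transpose_mul_le_sq_le {m n r : ℕ} (A : Matrix (Fin m) (Fin n) ℝ)
    (hr : A.rank = r) :
    frob (Aᵀ * A) ≤ (frob A) ^ 2 ∧ (frob A) ^ 2 ≤ Real.sqrt r * frob (Aᵀ * A) := by
  classical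
  set B := Aᵀ * A with hBdef
  have hB : B.IsHermitian := by
    have := isHermitian_conjTranspose_mul_self A
    rwa [conjTranspose_eq_transpose_of_trivial] at this
  set lam := hB.eigenvalues with hlam
  have hlam_nonneg : ∀ i, 0 ≤ lam i :=
    (Matrix.posSemidef_conjTranspose_mul_self A).eigenvalues_nonneg
  -- ∑ A² = trace B = ∑ lam
  have hA2 : ∑ i, ∑ j, (A i j) ^ 2 = ∑ i, lam i := by
    rw [← aux_trace_eq_sum_eigenvalues hB, Matrix.trace, hBdef]
    rw [Finset.sum_comm]
    simp [Matrix.diag, Matrix.mul_apply, sq]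
  -- ∑ B² = trace (B*B) = ∑ lam²
  have hB2 : ∑ i, ∑ j, (B i j) ^ 2 = ∑ i, lam i ^ 2 := by
    rw [← aux_trace_sq_eq_sum_sq hB, Matrix.trace]
    have hsymm : ∀ a b, B a b = B b a := by
      intro a b; simp [hBdef, Matrix.mul_apply, mul_comm]
    simp only [Matrix.diag, Matrix.mul_apply]
    rw [Finset.sum_comm]
    refine Finset.sum_congr rfl fun j _ => Finset.sum_congr rfl fun i _ => ?_
    rw [hsymm j i, sq]
  have hsum_nonneg : 0 ≤ ∑ i, lam i := Finset.sum_nonneg fun i _ => hlam_nonneg i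
  have hfrobA : (frob A) ^ 2 = ∑ i, lam i := by
    rw [frob, Real.sq_sqrt (by rw [hA2]; exact hsum_nonneg), hA2]
  have hfrobB : frob B = Real.sqrt (∑ i, lam i ^ 2) := by rw [frob, hB2]
  constructor
  · -- sqrt (∑ lam²) ≤ ∑ lam
    rw [hfrobA, hfrobB]
    have h1 : ∑ i, lam i ^ 2 ≤ (∑ i, lam i) ^ 2 := by
      rw [sq (∑ i, lam i), Finset.sum_mul]
      refine Finset.sum_le_sum fun i _ => ?_
      rw [sq]
      exact mul_le_mul_of_nonneg_left
        (Finset.single_le_sum (fun j _ => hlam_nonneg j) (Finset.mem_univ i))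
        (hlam_nonneg i)
    calc Real.sqrt (∑ i, lam i ^ 2) ≤ Real.sqrt ((∑ i, lam i) ^ 2) :=
          Real.sqrt_le_sqrt h1
      _ = ∑ i, lam i := Real.sqrt_sq hsum_nonneg
  · -- ∑ lam ≤ sqrt r * sqrt (∑ lam²)
    rw [hfrobA, hfrobB]
    have hrank : (Finset.univ.filter fun i => lam i ≠ 0).card = r := by
      have h1 : B.rank = r := by rw [hBdef, Matrix.rank_transpose_mul_self, hr]
      have h2 := hB.rank_eq_card_non_zero_eigs
      rw [h1, Fintype.card_subtype] at h2
      exact h2.symm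
    set s := Finset.univ.filter fun i => lam i ≠ 0 with hs
    have hsum_s : ∑ i, lam i = ∑ i ∈ s, lam i := by
      rw [hs]
      exact (Finset.sum_filter_ne_zero _).symm
    have hsq_s : ∑ i ∈ s, lam i ^ 2 ≤ ∑ i, lam i ^ 2 :=
      Finset.sum_le_sum_of_subset_of_nonneg (Finset.filter_subset _ _)
        (fun i _ _ => sq_nonneg _)
    have hcs : (∑ i ∈ s, lam i) ^ 2 ≤ (s.card : ℝ) * ∑ i ∈ s, lam i ^ 2 :=
      sq_sum_le_card_mul_sum_sq
    have key : (∑ i, lam i) ^ 2 ≤ (r : ℝ) * ∑ i, lam i ^ 2 := by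
      rw [hsum_s]
      calc (∑ i ∈ s, lam i) ^ 2 ≤ (s.card : ℝ) * ∑ i ∈ s, lam i ^ 2 := hcs
        _ ≤ (r : ℝ) * ∑ i, lam i ^ 2 := by
            rw [hrank]
            exact mul_le_mul_of_nonneg_left hsq_s (Nat.cast_nonneg r)
    have := Real.sqrt_le_sqrt key
    rw [Real.sqrt_sq hsum_nonneg, Real.sqrt_mul (Nat.cast_nonneg r)] at this
    exact this
end

section
/- Under the gradient-descent update W_l(t+1) = (1−ηλ)W_l(t) − η·W_{L:l+1}ᵀ(t)·(W_{L:1}(t) − Φ)·W_{l−1:1}ᵀ(t), suppose at time t there exist unit vectors v_i^{(l)}, u_i^{(l)} with v_i^{(l+1)} = u_i^{(l)}, W_l(t)v_i^{(l)} = ρ(t)u_i^{(l)}, W_l(t)ᵀu_i^{(l)} = ρ(t)v_i^{(l)} for all l ∈ [L], and Φᵀ W_{L:l+1}(t) u_i^{(l)} = 0, Φ W_{l−1:1}ᵀ(t) v_i^{(l)} = 0 for all l ∈ [L]. Then W_l(t+1) v_i^{(l)} = ρ(t+1) u_i^{(l)} with ρ(t+1) = ρ(t)(1 − ηλ − η·ρ(t)^{2(L−1)}).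 -/
open Matrix

/-- `prodSeg W i j = W_j W_{j-1} ⋯ W_i` (equal to `1` when `j < i`). -/
def prodSeg {d : ℕ} (W : ℕ → Matrix (Fin d) (Fin d) ℝ) (i : ℕ) :
    ℕ → Matrix (Fin d) (Fin d) ℝ
  | 0 => 1
  | j + 1 => if j + 1 < i then 1 else W (j + 1) * prodSeg W i j

/-- Euclidean norm of a vector in `ℝ^d`. -/
noncomputable def enorm' {d : ℕ} (x : Fin d → ℝ) : ℝ :=
  Real.sqrt (∑ k, (x k) ^ 2)

lemma prodSeg_of_lt {d : ℕ} (W : ℕ → Matrix (Fin d) (Fin d) ℝ) {i j : ℕ} (h : j < i) :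
    prodSeg W i j = 1 := by
  cases j with
  | zero => rfl
  | succ j => simp [prodSeg, h]

lemma prodSeg_succ {d : ℕ} (W : ℕ → Matrix (Fin d) (Fin d) ℝ) {i j : ℕ} (h : ¬ j + 1 < i) :
    prodSeg W i (j + 1) = W (j + 1) * prodSeg W i j := by
  simp [prodSeg, h]

/-- One step of gradient descent with weight decay preserves the singular direction:
if at time `t` the invariant-subspace conditions hold, then
`W_l(t+1) v_i^{(l)} = ρ(t+1) u_i^{(l)}` with
`ρ(t+1) = ρ(t)(1 − ηλ − η ρ(t)^{2(L−1)})`. -/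
theorem gd_step_preserves_direction {d m L : ℕ} (hL : 2 ≤ L)
    (η lam : ℝ) (hη : 0 ≤ η) (hlam : 0 ≤ lam)
    (W Wnext : ℕ → Matrix (Fin d) (Fin d) ℝ) (Φ : Matrix (Fin d) (Fin d) ℝ)
    (ρ : ℝ) (u v : ℕ → Fin m → (Fin d → ℝ))
    (hupdate : ∀ l ∈ Finset.Icc 1 L,
      Wnext l = (1 - η * lam) • W l -
        η • ((prodSeg W (l + 1) L)ᵀ * (prodSeg W 1 L - Φ) * (prodSeg W 1 (l - 1))ᵀ))
    (hunit_u : ∀ l ∈ Finset.Icc 1 L, ∀ i : Fin m, enorm' (u l i) = 1)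
    (hunit_v : ∀ l ∈ Finset.Icc 1 L, ∀ i : Fin m, enorm' (v l i) = 1)
    (hchain : ∀ l ∈ Finset.Icc 1 (L - 1), ∀ i : Fin m, v (l + 1) i = u l i)
    (hWv : ∀ l ∈ Finset.Icc 1 L, ∀ i : Fin m, (W l).mulVec (v l i) = ρ • u l i)
    (hWu : ∀ l ∈ Finset.Icc 1 L, ∀ i : Fin m, (W l)ᵀ.mulVec (u l i) = ρ • v l i)
    (hC : ∀ l ∈ Finset.Icc 1 L, ∀ i : Fin m,
      (Φᵀ * prodSeg W (l + 1) L).mulVec (u l i) = 0)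
    (hD : ∀ l ∈ Finset.Icc 1 L, ∀ i : Fin m,
      (Φ * (prodSeg W 1 (l - 1))ᵀ).mulVec (v l i) = 0) :
    ∀ l ∈ Finset.Icc 1 L, ∀ i : Fin m,
      (Wnext l).mulVec (v l i) =
        (ρ * (1 - η * lam - η * ρ ^ (2 * (L - 1)))) • u l i := by
  intro l hl i
  rw [Finset.mem_Icc] at hl
  obtain ⟨hl1, hlL⟩ := hl
  -- Lemma 1: (prodSeg W 1 k)ᵀ *ᵥ v (k+1) i = ρ^k • v 1 i for k ≤ L - 1
  have lem1 : ∀ k, k ≤ L - 1 → (prodSeg W 1 k)ᵀ.mulVec (v (k + 1) i) = ρ ^ k • v 1 i := by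
    intro k
    induction k with
    | zero => intro _; simp [prodSeg]
    | succ k ih =>
      intro hk
      have hk' : k ≤ L - 1 := by omega
      have hch : v (k + 1 + 1) i = u (k + 1) i := by
        apply hchain (k + 1) (Finset.mem_Icc.mpr ⟨by omega, hk⟩)
      rw [prodSeg_succ W (by omega), Matrix.transpose_mul, ← Matrix.mulVec_mulVec, hch,
        hWu (k + 1) (Finset.mem_Icc.mpr ⟨by omega, by omega⟩),
        Matrix.mulVec_smul, ih hk', smul_smul, pow_succ]
      ring_nf
  -- Lemma 2: prodSeg W 1 k *ᵥ v 1 i = ρ^k • u k i for 1 ≤ k ≤ L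
  have lem2 : ∀ k, 1 ≤ k → k ≤ L → (prodSeg W 1 k).mulVec (v 1 i) = ρ ^ k • u k i := by
    intro k
    induction k with
    | zero => omega
    | succ k ih =>
      intro _ hk
      rcases Nat.eq_zero_or_pos k with hk0 | hk0
      · subst hk0
        rw [prodSeg_succ W (by omega), prodSeg_of_lt W (by omega), mul_one,
          hWv 1 (Finset.mem_Icc.mpr ⟨le_refl 1, by omega⟩)]
        simp
      · have hch : v (k + 1) i = u k i := by
          apply hchain k (Finset.mem_Icc.mpr ⟨hk0, by omega⟩)
        rw [prodSeg_succ W (by omega), ← Matrix.mulVec_mulVec, ih hk0 (by omega), ← hch,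
          Matrix.mulVec_smul, hWv (k + 1) (Finset.mem_Icc.mpr ⟨by omega, hk⟩),
          smul_smul, pow_succ]
  -- Lemma 3: (prodSeg W (l+1) j)ᵀ *ᵥ u j i = ρ^(j-l) • u l i for l ≤ j ≤ L
  have lem3 : ∀ j, l ≤ j → j ≤ L → (prodSeg W (l + 1) j)ᵀ.mulVec (u j i) = ρ ^ (j - l) • u l i := by
    intro j
    induction j with
    | zero =>
      intro hj _
      have : l = 0 := by omega
      omega
    | succ j ih =>
      intro hj hjL
      rcases Nat.lt_or_ge j l with hjl | hjl
      · have : l = j + 1 := by omega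
        subst this
        rw [prodSeg_of_lt W (by omega)]
        simp
      · have hch : v (j + 1) i = u j i := by
          apply hchain j (Finset.mem_Icc.mpr ⟨by omega, by omega⟩)
        rw [prodSeg_succ W (by omega), Matrix.transpose_mul, ← Matrix.mulVec_mulVec,
          hWu (j + 1) (Finset.mem_Icc.mpr ⟨by omega, hjL⟩), Matrix.mulVec_smul, hch,
          ih hjl (by omega), smul_smul]
        have : j + 1 - l = (j - l) + 1 := by omega
        rw [this, pow_succ]
        ring_nf
  -- inner vector
  have h1 : (prodSeg W 1 (l - 1))ᵀ.mulVec (v l i) = ρ ^ (l - 1) • v 1 i := by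
    have := lem1 (l - 1) (by omega)
    rwa [show l - 1 + 1 = l by omega] at this
  have hD' : Φ.mulVec ((prodSeg W 1 (l - 1))ᵀ.mulVec (v l i)) = 0 := by
    rw [Matrix.mulVec_mulVec]
    exact hD l (Finset.mem_Icc.mpr ⟨hl1, hlL⟩) i
  have h2 : (prodSeg W 1 L - Φ).mulVec ((prodSeg W 1 (l - 1))ᵀ.mulVec (v l i)) =
      ρ ^ (l - 1 + L) • u L i := by
    rw [Matrix.sub_mulVec, hD', sub_zero, h1, Matrix.mulVec_smul,
      lem2 L (by omega) (le_refl L), smul_smul, pow_add]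
  have h3 : (prodSeg W (l + 1) L)ᵀ.mulVec (ρ ^ (l - 1 + L) • u L i) =
      ρ ^ (2 * L - 1) • u l i := by
    rw [Matrix.mulVec_smul, lem3 L hlL (le_refl L), smul_smul, ← pow_add,
      show l - 1 + L + (L - l) = 2 * L - 1 by omega]
  rw [hupdate l (Finset.mem_Icc.mpr ⟨hl1, hlL⟩), Matrix.sub_mulVec,
    Matrix.smul_mulVec, Matrix.smul_mulVec,
    hWv l (Finset.mem_Icc.mpr ⟨hl1, hlL⟩), mul_assoc,
    ← Matrix.mulVec_mulVec, ← Matrix.mulVec_mulVec, h2, h3, smul_smul, smul_smul, ← sub_smul]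
  congr 1
  have h2L : 2 * L - 1 = 2 * (L - 1) + 1 := by omega
  rw [h2L, pow_succ]
  ring
end
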